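/- The maximum row sum of the Gram matrix G^{(n,d)} equals ∏_{j=1}^{n−1}(1 + j/d), which is at most e^{n(n−1)/2d}. Consequently, the maximum eigenvalue of G^{(n,d)} is at most e^{n(n−1)/2d}, and if n² ≤ d then the operator norm ‖G^{(n,d)} − I‖ ≤ n²/d. -/

import Mathlib

/-- The minimal number of transpositions whose product is `π`. -/
noncomputable def transLength {n : ℕ} (π : Equiv.Perm (Fin n)) : ℕ :=
  sInf {k | ∃ l : List (Equiv.Perm (Fin n)),
    l.length = k ∧ (∀ τ ∈ l, τ.IsSwap) ∧ l.prod = π}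

/-- The Gram matrix `G^{(n,d)}` with entries `d^{-|π₁⁻¹ π₂|}`. -/
noncomputable def gramMatrix (n d : ℕ) :
    Matrix (Equiv.Perm (Fin n)) (Equiv.Perm (Fin n)) ℝ :=
  Matrix.of fun π₁ π₂ => ((d : ℝ)⁻¹) ^ transLength (π₁⁻¹ * π₂)


open Equiv Module

/-- The subspace of vectors fixed by the permutation action. -/
def fixSub {n : ℕ} (π : Equiv.Perm (Fin n)) : Submodule ℝ (Fin n → ℝ) where
  carrier := {x | ∀ i, x (π i) = x i}
  add_mem' hx hy i := by simp [hx i, hy i]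
  zero_mem' i := rfl
  smul_mem' c x hx i := by simp [hx i]

lemma mem_fixSub {n : ℕ} {π : Equiv.Perm (Fin n)} {x : Fin n → ℝ} :
    x ∈ fixSub π ↔ ∀ i, x (π i) = x i := Iff.rfl

/-- dimension of the fixed subspace, packaged to keep instances uniform -/
noncomputable def fixRank {n : ℕ} (π : Equiv.Perm (Fin n)) : ℕ :=
  Module.finrank ℝ (fixSub π)

lemma fixSub_one {n : ℕ} : fixSub (1 : Equiv.Perm (Fin n)) = ⊤ := by
  ext x; simp [mem_fixSub]

lemma inf_le_fixSub_mul {n : ℕ} (σ τ : Equiv.Perm (Fin n)) :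
    fixSub σ ⊓ fixSub τ ≤ fixSub (σ * τ) := by
  rintro x ⟨hσ, hτ⟩ i
  have := hσ (τ i)
  simp only [Equiv.Perm.mul_apply]
  rw [this, hτ i]

lemma fixSub_swap {n : ℕ} {a b : Fin n} (hab : a ≠ b) :
    Module.finrank ℝ (fixSub (Equiv.swap a b)) + 1 = n := by
  classical
  set φ : (Fin n → ℝ) →ₗ[ℝ] ℝ := (LinearMap.proj a : (Fin n → ℝ) →ₗ[ℝ] ℝ) - (LinearMap.proj b : (Fin n → ℝ) →ₗ[ℝ] ℝ) with hφ
  have hker : fixSub (Equiv.swap a b) = LinearMap.ker φ := by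
    ext x
    simp only [mem_fixSub, LinearMap.mem_ker, hφ, LinearMap.sub_apply, LinearMap.proj_apply,
      sub_eq_zero]
    constructor
    · intro h
      have := h a
      rw [Equiv.swap_apply_left] at this
      exact this.symm
    · intro h i
      rcases eq_or_ne i a with rfl | ha
      · rw [Equiv.swap_apply_left]; exact h.symm
      rcases eq_or_ne i b with rfl | hb
      · rw [Equiv.swap_apply_right]; exact h
      · rw [Equiv.swap_apply_of_ne_of_ne ha hb]
  have hsurj : LinearMap.range φ = ⊤ := by
    rw [LinearMap.range_eq_top]
    intro c
    refine ⟨c • (Pi.single a 1 : Fin n → ℝ), ?_⟩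
    simp [hφ, Pi.single_eq_of_ne (Ne.symm hab) , hab]
  have := LinearMap.finrank_range_add_finrank_ker φ
  rw [hsurj, finrank_top] at this
  simp only [Module.finrank_self, Module.finrank_fin_fun] at this
  rw [hker]
  omega

/-- Lower bound: a product of `k` swaps has fixed space of codimension at most `k`. -/
lemma finrank_fixSub_prod {n : ℕ} (l : List (Equiv.Perm (Fin n)))
    (hl : ∀ τ ∈ l, τ.IsSwap) :
    n ≤ fixRank l.prod + l.length := by
  classical
  simp only [fixRank]
  induction l with
  | nil =>
    rw [List.prod_nil, fixSub_one, List.length_nil, add_zero, finrank_top,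
      Module.finrank_fin_fun]
  | cons τ rest ih =>
    have hτ : τ.IsSwap := hl τ (by simp)
    obtain ⟨a, b, hab, rfl⟩ := hτ
    have hrest := ih (fun σ hσ => hl σ (by simp [hσ]))
    have hsw := fixSub_swap hab
    have hinf := inf_le_fixSub_mul (Equiv.swap a b) rest.prod
    have h1 : Module.finrank ℝ (fixSub (Equiv.swap a b) ⊓ fixSub rest.prod : Submodule ℝ (Fin n → ℝ))
        ≤ Module.finrank ℝ (fixSub (Equiv.swap a b * rest.prod)) :=
      Submodule.finrank_mono hinf
    have h2 := Submodule.finrank_sup_add_finrank_inf_eq (fixSub (Equiv.swap a b)) (fixSub rest.prod)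
    have h3 : Module.finrank ℝ (fixSub (Equiv.swap a b) ⊔ fixSub rest.prod : Submodule ℝ (Fin n → ℝ)) ≤ n := by
      have := Submodule.finrank_le (fixSub (Equiv.swap a b) ⊔ fixSub rest.prod : Submodule ℝ (Fin n → ℝ))
      rwa [Module.finrank_fin_fun] at this
    simp only [List.prod_cons, List.length_cons]
    show n ≤ Module.finrank ℝ (fixSub (Equiv.swap a b * rest.prod)) + (rest.length + 1)
    omega

open Equiv Module


lemma transLength_set_nonempty {n : ℕ} (π : Equiv.Perm (Fin n)) :
    {k | ∃ l : List (Equiv.Perm (Fin n)),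
      l.length = k ∧ (∀ τ ∈ l, τ.IsSwap) ∧ l.prod = π}.Nonempty := by
  obtain ⟨⟨l, hp, hs⟩, -⟩ := Trunc.exists_rep (Equiv.Perm.truncSwapFactors π)
  exact ⟨l.length, l, rfl, hs, hp⟩

lemma transLength_le {n : ℕ} {π : Equiv.Perm (Fin n)} (l : List (Equiv.Perm (Fin n)))
    (hs : ∀ τ ∈ l, τ.IsSwap) (hp : l.prod = π) : transLength π ≤ l.length :=
  Nat.sInf_le ⟨l, rfl, hs, hp⟩

lemma transLength_spec {n : ℕ} (π : Equiv.Perm (Fin n)) :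
    ∃ l : List (Equiv.Perm (Fin n)),
      l.length = transLength π ∧ (∀ τ ∈ l, τ.IsSwap) ∧ l.prod = π :=
  Nat.sInf_mem (transLength_set_nonempty π)

lemma transLength_one {n : ℕ} : transLength (1 : Equiv.Perm (Fin n)) = 0 :=
  Nat.le_zero.mp (transLength_le [] (by simp) (by simp))

/-- The embedding `Perm (Fin n) →* Perm (Fin (n+1))` through `Fin.succ`. -/
def extHom {n : ℕ} : Equiv.Perm (Fin n) →* Equiv.Perm (Fin (n + 1)) where
  toFun e := Equiv.Perm.decomposeFin.symm (0, e)
  map_one' := by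
    ext i
    refine Fin.cases ?_ (fun x => ?_) i
    · simp [Equiv.Perm.decomposeFin_symm_apply_zero]
    · simp [Equiv.Perm.decomposeFin_symm_apply_succ]
  map_mul' e f := by
    ext i
    refine Fin.cases ?_ (fun x => ?_) i
    · simp [Equiv.Perm.decomposeFin_symm_apply_zero]
    · simp [Equiv.Perm.decomposeFin_symm_apply_succ]

@[simp] lemma extHom_apply_zero {n : ℕ} (e : Equiv.Perm (Fin n)) :
    extHom e 0 = 0 := Equiv.Perm.decomposeFin_symm_apply_zero 0 e

@[simp] lemma extHom_apply_succ {n : ℕ} (e : Equiv.Perm (Fin n)) (x : Fin n) :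
    extHom e x.succ = (e x).succ := by
  have := Equiv.Perm.decomposeFin_symm_apply_succ e 0 x
  simpa [extHom] using this

lemma extHom_swap {n : ℕ} (a b : Fin n) :
    extHom (Equiv.swap a b) = Equiv.swap a.succ b.succ := by
  ext i
  refine Fin.cases ?_ (fun x => ?_) i
  · rw [extHom_apply_zero, Equiv.swap_apply_of_ne_of_ne (Fin.succ_ne_zero a).symm
      (Fin.succ_ne_zero b).symm]
  · rw [extHom_apply_succ]
    rcases eq_or_ne x a with rfl | ha
    · rw [Equiv.swap_apply_left, Equiv.swap_apply_left]
    rcases eq_or_ne x b with rfl | hb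
    · rw [Equiv.swap_apply_right, Equiv.swap_apply_right]
    · rw [Equiv.swap_apply_of_ne_of_ne ha hb, Equiv.swap_apply_of_ne_of_ne
        (fun h => ha (Fin.succ_injective _ h)) (fun h => hb (Fin.succ_injective _ h))]

lemma decomposeFin_symm_eq {n : ℕ} (p : Fin (n + 1)) (e : Equiv.Perm (Fin n)) :
    Equiv.Perm.decomposeFin.symm (p, e) = Equiv.swap 0 p * extHom e := by
  ext i
  refine Fin.cases ?_ (fun x => ?_) i
  · simp [Equiv.Perm.decomposeFin_symm_apply_zero]
  · simp [Equiv.Perm.decomposeFin_symm_apply_succ]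

lemma transLength_extHom_le {n : ℕ} (e : Equiv.Perm (Fin n)) :
    transLength (extHom e) ≤ transLength e := by
  obtain ⟨l, hlen, hs, hp⟩ := transLength_spec e
  refine le_trans (transLength_le (l.map extHom) ?_ ?_) (by simp [hlen])
  · intro τ hτ
    obtain ⟨σ, hσ, rfl⟩ := List.mem_map.mp hτ
    obtain ⟨a, b, hab, rfl⟩ := hs σ hσ
    exact ⟨a.succ, b.succ, fun h => hab (Fin.succ_injective _ h), extHom_swap a b⟩
  · rw [← hp]
    exact (MonoidHom.map_list_prod extHom l).symm

lemma transLength_decomposeFin_le {n : ℕ} (p : Fin (n + 1)) (e : Equiv.Perm (Fin n)) :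
    transLength (Equiv.Perm.decomposeFin.symm (p, e))
      ≤ transLength e + if p = 0 then 0 else 1 := by
  rcases eq_or_ne p 0 with rfl | hp
  · rw [decomposeFin_symm_eq, Equiv.swap_self, Equiv.Perm.refl_mul]
    simpa using transLength_extHom_le e
  · rw [decomposeFin_symm_eq, if_neg hp]
    obtain ⟨l, hlen, hs, hp'⟩ := transLength_spec (extHom e)
    refine le_trans (transLength_le (Equiv.swap 0 p :: l) ?_ ?_) ?_
    · intro τ hτ
      rcases List.mem_cons.mp hτ with rfl | h
      · exact ⟨0, p, Ne.symm hp, rfl⟩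
      · exact hs τ h
    · rw [List.prod_cons, hp']
    · simp only [List.length_cons, hlen]
      have := transLength_extHom_le e
      omega

variable {n : ℕ}

/-- restriction along `Fin.succ` as a linear map -/
noncomputable def resLin (n : ℕ) : (Fin (n + 1) → ℝ) →ₗ[ℝ] (Fin n → ℝ) :=
  LinearMap.funLeft ℝ ℝ Fin.succ

@[simp] lemma resLin_apply (x : Fin (n + 1) → ℝ) (j : Fin n) :
    resLin n x j = x j.succ := rfl

lemma res_mem_fixSub_of_extHom (e : Equiv.Perm (Fin n)) {x : Fin (n + 1) → ℝ}
    (hx : x ∈ fixSub (extHom e)) : resLin n x ∈ fixSub e := by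
  intro j
  have := hx j.succ
  rwa [extHom_apply_succ] at this

lemma finrank_fixSub_extHom (e : Equiv.Perm (Fin n)) :
    fixRank (extHom e) = fixRank e + 1 := by
  classical
  simp only [fixRank]
  let fwd : (fixSub (extHom e) : Submodule ℝ (Fin (n+1) → ℝ)) →ₗ[ℝ] ℝ × fixSub e :=
    LinearMap.prod ((LinearMap.proj 0).comp (fixSub (extHom e)).subtype)
      (LinearMap.codRestrict (fixSub e) ((resLin n).comp (fixSub (extHom e)).subtype)
        (fun x => res_mem_fixSub_of_extHom e x.2))
  have hbij : Function.Bijective fwd := by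
    constructor
    · intro x y hxy
      have h1 := Prod.ext_iff.mp hxy
      have h0 : (x : Fin (n+1) → ℝ) 0 = (y : Fin (n+1) → ℝ) 0 := h1.1
      have hs : ∀ j : Fin n, (x : Fin (n+1) → ℝ) j.succ = (y : Fin (n+1) → ℝ) j.succ := by
        intro j
        exact congrFun (congrArg Subtype.val h1.2) j
      ext i
      refine Fin.cases h0 hs i
    · rintro ⟨c, z, hz⟩
      have hmem : (Fin.cases c z : Fin (n+1) → ℝ) ∈ fixSub (extHom e) := by
        intro i
        refine Fin.cases ?_ (fun j => ?_) i
        · rw [extHom_apply_zero]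
        · rw [extHom_apply_succ]
          simp only [Fin.cases_succ]
          exact hz j
      refine ⟨⟨Fin.cases c z, hmem⟩, ?_⟩
      refine Prod.ext (by simp [fwd]) (Subtype.ext ?_)
      funext j
      rfl
  have := LinearEquiv.finrank_eq (LinearEquiv.ofBijective fwd hbij)
  rw [this, Module.finrank_prod, Module.finrank_self, add_comm]

lemma finrank_fixSub_decomposeFin_succ (p' : Fin n) (e : Equiv.Perm (Fin n)) :
    fixRank (Equiv.Perm.decomposeFin.symm (p'.succ, e)) = fixRank e := by
  classical
  simp only [fixRank]
  set π : Equiv.Perm (Fin (n+1)) := Equiv.Perm.decomposeFin.symm (p'.succ, e) with hπ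
  have hπ0 : π 0 = p'.succ := Equiv.Perm.decomposeFin_symm_apply_zero _ _
  have hπs : ∀ j : Fin n, π j.succ = Equiv.swap 0 p'.succ ((e j).succ) :=
    fun j => Equiv.Perm.decomposeFin_symm_apply_succ _ _ _
  have hres : ∀ {x : Fin (n+1) → ℝ}, x ∈ fixSub π → resLin n x ∈ fixSub e := by
    intro x hx j
    have hj := hx j.succ
    rw [hπs j] at hj
    rcases eq_or_ne (e j) p' with hej | hej
    · rw [hej, Equiv.swap_apply_right] at hj
      have h0 := hx 0
      rw [hπ0] at h0
      simp only [resLin_apply, hej]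
      rw [h0, hj]
    · rw [Equiv.swap_apply_of_ne_of_ne (Fin.succ_ne_zero _)
        (fun h => hej (Fin.succ_injective _ h))] at hj
      simpa using hj
  let fwd : (fixSub π : Submodule ℝ (Fin (n+1) → ℝ)) →ₗ[ℝ] fixSub e :=
    LinearMap.codRestrict (fixSub e) ((resLin n).comp (fixSub π).subtype)
      (fun x => hres x.2)
  have hbij : Function.Bijective fwd := by
    constructor
    · intro x y hxy
      have hs : ∀ j : Fin n, (x : Fin (n+1) → ℝ) j.succ = (y : Fin (n+1) → ℝ) j.succ :=
        fun j => congrFun (congrArg Subtype.val hxy) j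
      have h0 : (x : Fin (n+1) → ℝ) 0 = (y : Fin (n+1) → ℝ) 0 := by
        have hx0 := x.2 0
        have hy0 := y.2 0
        rw [hπ0] at hx0 hy0
        rw [← hx0, ← hy0]
        exact hs p'
      ext i
      refine Fin.cases h0 hs i
    · rintro ⟨z, hz⟩
      set q : Fin n := e⁻¹ p' with hq
      have heq : e q = p' := by simp [hq]
      have hmem : (Fin.cases (z q) z : Fin (n+1) → ℝ) ∈ fixSub π := by
        intro i
        refine Fin.cases ?_ (fun j => ?_) i
        · rw [hπ0]
          simp only [Fin.cases_succ, Fin.cases_zero]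
          rw [← heq]
          exact hz q
        · rw [hπs j]
          rcases eq_or_ne (e j) p' with hej | hej
          · have hjq : j = q := by rw [hq, ← hej, ← Equiv.Perm.mul_apply, inv_mul_cancel, Equiv.Perm.one_apply]
            rw [hej, Equiv.swap_apply_right]
            simp only [Fin.cases_zero, Fin.cases_succ, hjq]
          · rw [Equiv.swap_apply_of_ne_of_ne (Fin.succ_ne_zero _)
              (fun h => hej (Fin.succ_injective _ h))]
            simp only [Fin.cases_succ]
            exact hz j
      refine ⟨⟨Fin.cases (z q) z, hmem⟩, Subtype.ext ?_⟩
      funext j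
      rfl
  exact LinearEquiv.finrank_eq (LinearEquiv.ofBijective fwd hbij)

lemma extHom_def (e : Equiv.Perm (Fin n)) :
    extHom e = Equiv.Perm.decomposeFin.symm (0, e) := rfl

theorem transLength_add_finrank :
    ∀ (n : ℕ) (π : Equiv.Perm (Fin n)), transLength π + fixRank π = n := by
  intro n
  induction n with
  | zero =>
    intro π
    rw [Subsingleton.elim π 1, transLength_one]
    simp only [fixRank]
    rw [fixSub_one, finrank_top, Module.finrank_fin_fun]
  | succ n ih =>
    intro π
    rcases hpe : Equiv.Perm.decomposeFin π with ⟨p, e⟩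
    have hπ : π = Equiv.Perm.decomposeFin.symm (p, e) := by
      rw [← hpe]; exact (Equiv.symm_apply_apply _ _).symm
    have hlow : n + 1 ≤ fixRank π + transLength π := by
      obtain ⟨l, hlen, hs, hp⟩ := transLength_spec π
      have := finrank_fixSub_prod l hs
      rwa [hp, hlen] at this
    have hih := ih e
    rcases Fin.eq_zero_or_eq_succ p with rfl | ⟨p', rfl⟩
    · have hF : fixRank π = fixRank e + 1 := by
        rw [hπ, ← extHom_def, finrank_fixSub_extHom]
      have hup : transLength π ≤ transLength e := by
        have := transLength_decomposeFin_le 0 e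
        rw [if_pos rfl, add_zero] at this
        rw [hπ]; exact this
      omega
    · have hF : fixRank π = fixRank e := by
        rw [hπ, finrank_fixSub_decomposeFin_succ]
      have hup : transLength π ≤ transLength e + 1 := by
        have := transLength_decomposeFin_le p'.succ e
        rw [if_neg (Fin.succ_ne_zero p')] at this
        rw [hπ]; exact this
      omega

lemma transLength_decomposeFin (p : Fin (n + 1)) (e : Equiv.Perm (Fin n)) :
    transLength (Equiv.Perm.decomposeFin.symm (p, e))
      = transLength e + if p = 0 then 0 else 1 := by
  have h1 := transLength_add_finrank (n + 1) (Equiv.Perm.decomposeFin.symm (p, e))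
  have h2 := transLength_add_finrank n e
  rcases Fin.eq_zero_or_eq_succ p with rfl | ⟨p', rfl⟩
  · rw [← extHom_def] at h1 ⊢
    have hF := finrank_fixSub_extHom e
    rw [if_pos rfl]
    omega
  · have hF := finrank_fixSub_decomposeFin_succ p' e
    rw [if_neg (Fin.succ_ne_zero p')]
    omega

lemma sum_pow_transLength (z : ℝ) :
    ∀ n : ℕ, ∑ π : Equiv.Perm (Fin n), z ^ transLength π
      = ∏ j ∈ Finset.range n, (1 + (j : ℝ) * z) := by
  intro n
  induction n with
  | zero =>
    rw [Finset.range_zero, Finset.prod_empty]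
    have h1 : ∀ π : Equiv.Perm (Fin 0), z ^ transLength π = 1 := fun π => by
      rw [Subsingleton.elim π 1, transLength_one, pow_zero]
    rw [Finset.sum_congr rfl fun π _ => h1 π, Finset.sum_const, Finset.card_univ]
    simp
  | succ n ih =>
    have hcomp := Equiv.sum_comp (Equiv.Perm.decomposeFin (n := n)).symm
      (fun π => z ^ transLength π)
    rw [← hcomp, Fintype.sum_prod_type]
    have : ∀ p : Fin (n + 1), ∑ e : Equiv.Perm (Fin n),
        z ^ transLength (Equiv.Perm.decomposeFin.symm (p, e))
        = (if p = 0 then 1 else z) * ∑ e : Equiv.Perm (Fin n), z ^ transLength e := by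
      intro p
      rw [Finset.mul_sum]
      refine Finset.sum_congr rfl fun e _ => ?_
      rw [transLength_decomposeFin, pow_add]
      rcases eq_or_ne p 0 with rfl | hp
      · rw [if_pos rfl, if_pos rfl, pow_zero, one_mul, mul_one]
      · rw [if_neg hp, if_neg hp, pow_one, mul_comm]
    rw [Finset.sum_congr rfl (fun p _ => this p), ← Finset.sum_mul]
    have hsum : ∑ p : Fin (n + 1), (if p = 0 then (1 : ℝ) else z) = 1 + n * z := by
      rw [Fin.sum_univ_succ, if_pos rfl]
      rw [Finset.sum_congr rfl (fun i _ => if_neg (Fin.succ_ne_zero i))]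
      rw [Finset.sum_const, Finset.card_univ, Fintype.card_fin, nsmul_eq_mul]
    rw [hsum, ih, Finset.prod_range_succ, mul_comm]

open Finset in
lemma schur_bound {m : Type*} [Fintype m] [DecidableEq m] (A : Matrix m m ℝ) {r : ℝ}
    (hr : 0 ≤ r) (h0 : ∀ i j, 0 ≤ A i j) (hrow : ∀ i, ∑ j, A i j ≤ r)
    (hcol : ∀ j, ∑ i, A i j ≤ r) :
    ‖Matrix.toEuclideanCLM (𝕜 := ℝ) A‖ ≤ r := by
  refine ContinuousLinearMap.opNorm_le_bound _ hr (fun x => ?_)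
  have hAx : ∀ i, (Matrix.toEuclideanCLM (𝕜 := ℝ) A x) i = ∑ j, A i j * x j := by
    intro i
    have := congrFun (Matrix.ofLp_toEuclideanCLM (𝕜 := ℝ) A x) i
    simpa [Matrix.mulVec, dotProduct] using this
  have hx2 : ‖x‖ ^ 2 = ∑ j, x j ^ 2 := by
    rw [EuclideanSpace.norm_eq, Real.sq_sqrt (by positivity)]
    simp [sq_abs]
  have hAx2 : ‖Matrix.toEuclideanCLM (𝕜 := ℝ) A x‖ ^ 2 = ∑ i, (∑ j, A i j * x j) ^ 2 := by
    rw [EuclideanSpace.norm_eq, Real.sq_sqrt (by positivity)]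
    refine Finset.sum_congr rfl fun i _ => ?_
    rw [Real.norm_eq_abs, sq_abs, hAx i]
  have key : ∑ i, (∑ j, A i j * x j) ^ 2 ≤ (r * ‖x‖) ^ 2 := by
    calc ∑ i, (∑ j, A i j * x j) ^ 2
        ≤ ∑ i, (∑ j, A i j) * (∑ j, A i j * x j ^ 2) := by
          refine Finset.sum_le_sum fun i _ => ?_
          have hcs := Finset.sum_mul_sq_le_sq_mul_sq Finset.univ
            (fun j => Real.sqrt (A i j)) (fun j => Real.sqrt (A i j) * x j)
          have h1 : ∀ j, Real.sqrt (A i j) * (Real.sqrt (A i j) * x j) = A i j * x j :=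
            fun j => by rw [← mul_assoc, Real.mul_self_sqrt (h0 i j)]
          have h2 : ∀ j, Real.sqrt (A i j) ^ 2 = A i j := fun j => Real.sq_sqrt (h0 i j)
          have h3 : ∀ j, (Real.sqrt (A i j) * x j) ^ 2 = A i j * x j ^ 2 :=
            fun j => by rw [mul_pow, h2 j]
          calc (∑ j, A i j * x j) ^ 2
              = (∑ j, Real.sqrt (A i j) * (Real.sqrt (A i j) * x j)) ^ 2 := by
                rw [Finset.sum_congr rfl fun j _ => (h1 j).symm]
            _ ≤ (∑ j, Real.sqrt (A i j) ^ 2) * (∑ j, (Real.sqrt (A i j) * x j) ^ 2) := hcs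
            _ = (∑ j, A i j) * (∑ j, A i j * x j ^ 2) := by
                rw [Finset.sum_congr rfl fun j _ => h2 j,
                  Finset.sum_congr rfl fun j _ => h3 j]
      _ ≤ ∑ i, r * (∑ j, A i j * x j ^ 2) := by
          refine Finset.sum_le_sum fun i _ => ?_
          refine mul_le_mul_of_nonneg_right (hrow i) ?_
          exact Finset.sum_nonneg fun j _ => mul_nonneg (h0 i j) (sq_nonneg _)
      _ = r * ∑ j, (∑ i, A i j) * x j ^ 2 := by
          rw [← Finset.mul_sum, Finset.sum_comm]
          congr 1
          exact Finset.sum_congr rfl fun j _ => (Finset.sum_mul _ _ _).symm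
      _ ≤ r * ∑ j, r * x j ^ 2 := by
          refine mul_le_mul_of_nonneg_left (Finset.sum_le_sum fun j _ => ?_) hr
          exact mul_le_mul_of_nonneg_right (hcol j) (sq_nonneg _)
      _ = (r * ‖x‖) ^ 2 := by rw [← Finset.mul_sum, ← hx2]; ring
  have := Real.sqrt_le_sqrt (hAx2 ▸ key)
  rwa [Real.sqrt_sq (norm_nonneg _), Real.sqrt_sq (mul_nonneg hr (norm_nonneg _))] at this


theorem gram_row_sum_and_norm_bounds (n d : ℕ) (hd : 1 ≤ d) :
    (∀ π₁ : Equiv.Perm (Fin n),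
      ∑ π₂ : Equiv.Perm (Fin n), gramMatrix n d π₁ π₂
        = ∏ j ∈ Finset.range n, (1 + (j : ℝ) / d)) ∧
    (∏ j ∈ Finset.range n, (1 + (j : ℝ) / d)
        ≤ Real.exp ((n * (n - 1) : ℝ) / (2 * d))) ∧
    (‖Matrix.toEuclideanCLM (𝕜 := ℝ) (n := Equiv.Perm (Fin n)) (gramMatrix n d)‖
        ≤ Real.exp ((n * (n - 1) : ℝ) / (2 * d))) ∧
    (((n : ℝ) ^ 2 ≤ d) →
      ‖Matrix.toEuclideanCLM (𝕜 := ℝ) (n := Equiv.Perm (Fin n)) (gramMatrix n d - 1)‖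
        ≤ (n : ℝ) ^ 2 / d) := by
  have hD0 : (0 : ℝ) < d := by exact_mod_cast hd
  set r : ℝ := ∏ j ∈ Finset.range n, (1 + (j : ℝ) / d) with hr_def
  -- row sums
  have hrow : ∀ π₁ : Equiv.Perm (Fin n),
      ∑ π₂ : Equiv.Perm (Fin n), gramMatrix n d π₁ π₂ = r := by
    intro π₁
    have hcomp := Equiv.sum_comp (Equiv.mulLeft π₁)
      (fun π₂ => gramMatrix n d π₁ π₂)
    rw [← hcomp]
    have h1 : ∀ σ : Equiv.Perm (Fin n),
        gramMatrix n d π₁ (Equiv.mulLeft π₁ σ) = ((d : ℝ)⁻¹) ^ transLength σ := by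
      intro σ
      simp [gramMatrix, inv_mul_cancel_left]
    rw [Finset.sum_congr rfl fun σ _ => h1 σ, sum_pow_transLength]
    exact Finset.prod_congr rfl fun j _ => by rw [div_eq_mul_inv]
  -- column sums
  have hcol : ∀ π₂ : Equiv.Perm (Fin n),
      ∑ π₁ : Equiv.Perm (Fin n), gramMatrix n d π₁ π₂ = r := by
    intro π₂
    have hcomp := Equiv.sum_comp ((Equiv.inv (Equiv.Perm (Fin n))).trans
      (Equiv.mulLeft π₂)) (fun π₁ => gramMatrix n d π₁ π₂)
    rw [← hcomp]
    have h1 : ∀ σ : Equiv.Perm (Fin n),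
        gramMatrix n d (π₂ * σ⁻¹) π₂ = ((d : ℝ)⁻¹) ^ transLength σ := by
      intro σ
      have : (π₂ * σ⁻¹)⁻¹ * π₂ = σ := by group
      simp [gramMatrix, this]
    rw [Finset.sum_congr rfl (fun σ _ => by
      simp only [Equiv.trans_apply, Equiv.inv_apply, Equiv.coe_mulLeft]
      exact h1 σ), sum_pow_transLength]
    exact Finset.prod_congr rfl fun j _ => by rw [div_eq_mul_inv]
  -- Gauss sum
  have hgauss : (∑ j ∈ Finset.range n, (j : ℝ)) = n * ((n : ℝ) - 1) / 2 := by
    rcases n with _ | m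
    · simp
    · have h := Finset.sum_range_id_mul_two (m + 1)
      have h2 : ((∑ i ∈ Finset.range (m + 1), i : ℕ) : ℝ) * 2 = (m + 1) * m := by
        exact_mod_cast congrArg (Nat.cast : ℕ → ℝ) h
      push_cast at h2 ⊢
      linarith
  -- exp bound
  have hexp : r ≤ Real.exp ((n * (n - 1) : ℝ) / (2 * d)) := by
    have h1 : r ≤ ∏ j ∈ Finset.range n, Real.exp ((j : ℝ) / d) := by
      refine Finset.prod_le_prod (fun j _ => by positivity) (fun j _ => ?_)
      have := Real.add_one_le_exp ((j : ℝ) / d)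
      linarith
    have h2 : ∏ j ∈ Finset.range n, Real.exp ((j : ℝ) / d)
        = Real.exp (∑ j ∈ Finset.range n, (j : ℝ) / d) := (Real.exp_sum _ _).symm
    have h3 : (∑ j ∈ Finset.range n, (j : ℝ) / d) = (n * (n - 1) : ℝ) / (2 * d) := by
      rw [← Finset.sum_div, hgauss, div_div]
    rw [h2, h3] at h1
    exact h1
  have hr0 : 0 ≤ r := Finset.prod_nonneg fun j _ => by positivity
  have hentry : ∀ π₁ π₂ : Equiv.Perm (Fin n), 0 ≤ gramMatrix n d π₁ π₂ :=
    fun π₁ π₂ => pow_nonneg (inv_nonneg.mpr hD0.le) _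
  refine ⟨hrow, hexp, ?_, ?_⟩
  · exact schur_bound _ (Real.exp_pos _).le hentry
      (fun i => (hrow i).le.trans hexp) (fun j => (hcol j).le.trans hexp)
  · intro hn2
    set B : Matrix (Equiv.Perm (Fin n)) (Equiv.Perm (Fin n)) ℝ := gramMatrix n d - 1
      with hB_def
    have hBentry : ∀ π₁ π₂, B π₁ π₂ =
        gramMatrix n d π₁ π₂ - if π₁ = π₂ then 1 else 0 := by
      intro π₁ π₂
      rw [hB_def, Matrix.sub_apply, Matrix.one_apply]
    have hdiag : ∀ π : Equiv.Perm (Fin n), gramMatrix n d π π = 1 := by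
      intro π
      simp [gramMatrix, transLength_one]
    have hB0 : ∀ π₁ π₂, 0 ≤ B π₁ π₂ := by
      intro π₁ π₂
      rw [hBentry]
      rcases eq_or_ne π₁ π₂ with rfl | hne
      · rw [if_pos rfl, hdiag]; norm_num
      · rw [if_neg hne, sub_zero]; exact hentry _ _
    have hBrow : ∀ π₁, ∑ π₂ : Equiv.Perm (Fin n), B π₁ π₂ = r - 1 := by
      intro π₁
      rw [Finset.sum_congr rfl fun π₂ _ => hBentry π₁ π₂, Finset.sum_sub_distrib,
        hrow π₁, Finset.sum_ite_eq Finset.univ π₁ (fun _ => (1:ℝ)), if_pos (Finset.mem_univ _)]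
    have hBcol : ∀ π₂, ∑ π₁ : Equiv.Perm (Fin n), B π₁ π₂ = r - 1 := by
      intro π₂
      rw [Finset.sum_congr rfl fun π₁ _ => hBentry π₁ π₂, Finset.sum_sub_distrib,
        hcol π₂, Finset.sum_ite_eq' Finset.univ π₂ (fun _ => (1:ℝ)), if_pos (Finset.mem_univ _)]
    -- numeric bound : r - 1 ≤ n^2/d
    have hkey : r - 1 ≤ (n : ℝ) ^ 2 / d := by
      set x : ℝ := (n * (n - 1) : ℝ) / (2 * d) with hx_def
      have hnum0 : (0 : ℝ) ≤ (n : ℝ) * ((n : ℝ) - 1) := by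
        rcases Nat.eq_zero_or_pos n with h | h
        · simp [h]
        · have h1 : (1 : ℝ) ≤ (n : ℝ) := by exact_mod_cast h
          nlinarith
      have hx0 : 0 ≤ x := by positivity
      have hxh : x ≤ 1 / 2 := by
        rw [hx_def, div_le_iff₀ (by linarith)]
        nlinarith
      have hexpx : Real.exp x ≤ 1 + 2 * x := by
        have h1 := Real.add_one_le_exp (-x)
        have h2 : Real.exp (-x) * Real.exp x = 1 := by
          rw [← Real.exp_add]; simp
        nlinarith [Real.exp_pos x, Real.exp_pos (-x)]
      have h2x : 2 * x ≤ (n : ℝ) ^ 2 / d := by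
        have hle : (n : ℝ) * ((n : ℝ) - 1) ≤ (n : ℝ) ^ 2 := by
          nlinarith [Nat.cast_nonneg (α := ℝ) n]
        rw [hx_def, ← mul_div_assoc, div_le_div_iff₀ (by linarith) hD0]
        nlinarith
      have := hexp.trans hexpx
      linarith
    exact schur_bound _ (by positivity) hB0
      (fun i => (hBrow i).le.trans hkey) (fun j => (hBcol j).le.trans hkey)
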